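/- For all integers a, b ≥ 0, setting n = a + b + 1, the rational number c_{a,b} is nonzero and its 2-adic valuation is given exactly by ν₂(c_{a,b}) = 2 − 2n + ν₂(n) + ν₂( C(2n−1, 2a) ). -/
import Mathlib


/-- The rational numbers `c_{a,b}^r = 2·(−1)^r·( C(2r, 2b+2) − (1 − 2^{−2r})·C(2r, 2a+1) )`
appearing in Zagier's formula. -/
def cZ (a b r : ℕ) : ℚ :=
  2 * (-1) ^ r * (((2 * r).choose (2 * b + 2) : ℚ)
    - (1 - (2 : ℚ) ^ (-(2 * (r : ℤ)))) * ((2 * r).choose (2 * a + 1) : ℚ))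

lemma val_neg_one_pow_mul (p n : ℕ) [Fact p.Prime] (q : ℚ) :
    padicValRat p ((-1) ^ n * q) = padicValRat p q := by
  rcases neg_one_pow_eq_or ℚ n with h | h <;> rw [h] <;> simp [padicValRat.neg]

/-- For all `a, b ≥ 0`, with `n = a + b + 1`, the number `c_{a,b}` is nonzero
and `ν₂(c_{a,b}) = 2 − 2n + ν₂(n) + ν₂(C(2n−1, 2a))`. -/
theorem cZ_two_adic_valuation_formula (a b : ℕ) :
    cZ a b (a + b + 1) ≠ 0 ∧
    padicValRat 2 (cZ a b (a + b + 1)) =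
      2 - 2 * ((a : ℤ) + b + 1) + (padicValNat 2 (a + b + 1) : ℤ)
        + (padicValNat 2 ((2 * (a + b + 1) - 1).choose (2 * a)) : ℤ) := by
  set n := a + b + 1 with hn
  -- Natural number facts about valuations
  have hB_pos : 0 < (2 * n).choose (2 * a + 1) := Nat.choose_pos (by omega)
  have key : 2 * n * ((2 * n - 1).choose (2 * a)) = (2 * n).choose (2 * a + 1) * (2 * a + 1) := by
    have h := Nat.add_one_mul_choose_eq (2 * a + 2 * b + 1) (2 * a)
    have h1 : 2 * n - 1 = 2 * a + 2 * b + 1 := by omega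
    have h2 : 2 * n = 2 * a + 2 * b + 1 + 1 := by omega
    rw [h1, h2]
    simpa using h
  set B := (2 * n).choose (2 * a + 1) with hBdef
  have hC_pos : 0 < (2 * n - 1).choose (2 * a) := Nat.choose_pos (by omega)
  have hνB : padicValNat 2 B =
      1 + padicValNat 2 n + padicValNat 2 ((2 * n - 1).choose (2 * a)) := by
    have h := congrArg (padicValNat 2) key
    rw [padicValNat.mul (by omega) hC_pos.ne', padicValNat.mul hB_pos.ne' (by omega)] at h
    have h2n : padicValNat 2 (2 * n) = 1 + padicValNat 2 n := by
      rw [padicValNat.mul two_ne_zero (by omega), padicValNat.self one_lt_two]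
    have h2a1 : padicValNat 2 (2 * a + 1) = 0 :=
      padicValNat.eq_zero_of_not_dvd (by omega)
    omega
  have hνB_lt : padicValNat 2 B < 2 * n := by
    have h1 : 2 ^ padicValNat 2 B ≤ B := Nat.le_of_dvd hB_pos pow_padicValNat_dvd
    have h2 : B < 2 ^ (2 * n) := by
      have hsum := Nat.sum_range_choose (2 * n)
      have hlt := Finset.single_lt_sum (f := (2 * n).choose) (s := Finset.range (2 * n + 1))
        (show (0 : ℕ) ≠ 2 * a + 1 by omega)
        (Finset.mem_range.mpr (by omega)) (Finset.mem_range.mpr (by omega))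
        (Nat.choose_pos (by omega)) (fun k _ _ => Nat.zero_le _)
      rw [hsum] at hlt
      exact hlt
    exact (Nat.pow_lt_pow_iff_right one_lt_two).mp (lt_of_le_of_lt h1 h2)
  -- Rational side
  have hB0 : (B : ℚ) ≠ 0 := Nat.cast_ne_zero.mpr hB_pos.ne'
  set Y : ℚ := (-1) ^ n * ((((2 : ℕ) : ℚ) ^ (2 * n - 1))⁻¹ * (B : ℚ)) with hY
  have hYne : Y ≠ 0 := by
    apply mul_ne_zero (pow_ne_zero _ (by norm_num))
    exact mul_ne_zero (inv_ne_zero (pow_ne_zero _ (by norm_num))) hB0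
  have hYval : padicValRat 2 Y = -((2 * n - 1 : ℕ) : ℤ) + (padicValNat 2 B : ℤ) := by
    rw [hY, val_neg_one_pow_mul,
      padicValRat.mul (inv_ne_zero (pow_ne_zero _ (by norm_num))) hB0,
      padicValRat.self_pow_inv, padicValRat.of_nat]
  have hYval' : padicValRat 2 Y =
      2 - 2 * ((a : ℤ) + b + 1) + (padicValNat 2 n : ℤ)
        + (padicValNat 2 ((2 * n - 1).choose (2 * a)) : ℤ) := by
    rw [hYval, hνB, Nat.cast_sub (by omega)]
    push_cast [hn]
    ring
  set A : ℤ := ((2 * n).choose (2 * b + 2) : ℤ) - (B : ℤ) with hA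
  have hsplit : cZ a b n = 2 * (-1) ^ n * (A : ℚ) + Y := by
    have hz : (2 : ℚ) ^ (-(2 * (n : ℤ))) = ((2 : ℚ) ^ (2 * n : ℕ))⁻¹ := by
      rw [zpow_neg]
      norm_cast
    have hpow : (2 : ℚ) ^ (2 * n : ℕ) = 2 * 2 ^ (2 * n - 1) := by
      rw [← pow_succ']
      congr 1
    rw [cZ, hz, hpow, hY, hA]
    push_cast
    field_simp
    rw [hBdef]
    ring
  by_cases hA0 : A = 0
  · rw [hsplit, hA0]
    simp only [Int.cast_zero, mul_zero, zero_add]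
    exact ⟨hYne, hYval'⟩
  · have hXne : (2 : ℚ) * (-1) ^ n * (A : ℚ) ≠ 0 := by
      apply mul_ne_zero (mul_ne_zero two_ne_zero (pow_ne_zero _ (by norm_num)))
      exact Int.cast_ne_zero.mpr hA0
    have hXval : 0 < padicValRat 2 (2 * (-1) ^ n * (A : ℚ)) := by
      have h1 : (2 : ℚ) * (-1) ^ n * (A : ℚ) = (-1) ^ n * (((2 * A : ℤ) : ℚ)) := by
        push_cast; ring
      rw [h1, val_neg_one_pow_mul, padicValRat.of_int]
      have h2 : 1 ≤ padicValInt 2 (2 * A) := by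
        rw [padicValInt, Int.natAbs_mul]
        exact one_le_padicValNat_of_dvd
          (by simpa [Int.natAbs_mul] using Nat.mul_pos two_pos (Int.natAbs_pos.mpr hA0))
          ⟨A.natAbs, rfl⟩
      exact_mod_cast h2
    have hYlt : padicValRat 2 Y < padicValRat 2 (2 * (-1) ^ n * (A : ℚ)) := by
      have : padicValRat 2 Y ≤ 0 := by
        rw [hYval]
        have : padicValNat 2 B ≤ 2 * n - 1 := by omega
        have hc : ((2 * n - 1 : ℕ) : ℤ) = 2 * (n : ℤ) - 1 := by
          rw [Nat.cast_sub (by omega)]; push_cast; ring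
        omega
      linarith
    have hne : 2 * (-1) ^ n * (A : ℚ) + Y ≠ 0 := by
      intro h
      have : Y = -(2 * (-1) ^ n * (A : ℚ)) := by linarith [h]
      rw [this, padicValRat.neg] at hYlt
      exact lt_irrefl _ hYlt
    constructor
    · rw [hsplit]; exact hne
    · rw [hsplit, add_comm, padicValRat.add_eq_of_lt (by rwa [add_comm]) hYne hXne hYlt, hYval']
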